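/- Let A ∈ ℝ^{n×n} have negative diagonal entries, and suppose there exist positive scalars d_1,…,d_n and e_1,…,e_n such that for all i: -a_{ii} d_i > Σ_{j≠i} |a_{ij}| d_j and -a_{ii} e_i > Σ_{j≠i} |a_{ji}| e_j. Then the diagonal matrix P with P_{ii} = e_i/d_i satisfies P·A + Aᵀ·P negative definite. -/

import Mathlib

open Matrix Finset

private lemma sum_erase_comm {n : ℕ} (f : Fin n → Fin n → ℝ) :
    ∑ i, ∑ j ∈ Finset.univ.erase i, f i j = ∑ j, ∑ i ∈ Finset.univ.erase j, f i j := by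
  have h1 : ∀ i : Fin n, ∑ j ∈ Finset.univ.erase i, f i j = (∑ j, f i j) - f i i := fun i =>
    Finset.sum_erase_eq_sub (Finset.mem_univ i)
  have h2 : ∀ j : Fin n, ∑ i ∈ Finset.univ.erase j, f i j = (∑ i, f i j) - f j j := fun j =>
    Finset.sum_erase_eq_sub (Finset.mem_univ j)
  simp only [h1, h2, Finset.sum_sub_distrib]
  rw [Finset.sum_comm]

private lemma quad_pos {n : ℕ} (B : Fin n → Fin n → ℝ) (hsym : ∀ i j, B i j = B j i)
    (hdom : ∀ i, ∑ j ∈ Finset.univ.erase i, |B i j| < B i i)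
    (y : Fin n → ℝ) (hy : y ≠ 0) : 0 < ∑ i, ∑ j, y i * (B i j * y j) := by
  have hpt : ∀ i j : Fin n, -(|B i j| * (y i ^ 2 + y j ^ 2) / 2) ≤ y i * (B i j * y j) := by
    intro i j
    have h3 : |y i| * |y j| ≤ (y i ^ 2 + y j ^ 2) / 2 := by
      nlinarith [sq_nonneg (|y i| - |y j|), sq_abs (y i), sq_abs (y j)]
    have h4 := neg_abs_le (y i * (B i j * y j))
    have h2 : |y i * (B i j * y j)| = |B i j| * (|y i| * |y j|) := by
      rw [abs_mul, abs_mul]; ring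
    nlinarith [mul_le_mul_of_nonneg_left h3 (abs_nonneg (B i j))]
  have hkey : ∑ i, ∑ j ∈ Finset.univ.erase i, |B i j| * (y i ^ 2 + y j ^ 2) / 2
      = ∑ i, (∑ j ∈ Finset.univ.erase i, |B i j|) * y i ^ 2 := by
    have e1 : ∀ i j : Fin n, |B i j| * (y i ^ 2 + y j ^ 2) / 2
        = |B i j| * y i ^ 2 / 2 + |B i j| * y j ^ 2 / 2 := fun i j => by ring
    simp only [e1, Finset.sum_add_distrib]
    have e2 : ∑ i, ∑ j ∈ Finset.univ.erase i, |B i j| * y j ^ 2 / 2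
        = ∑ i, ∑ j ∈ Finset.univ.erase i, |B i j| * y i ^ 2 / 2 := by
      rw [sum_erase_comm (fun i j => |B i j| * y j ^ 2 / 2)]
      exact Finset.sum_congr rfl fun j _ => Finset.sum_congr rfl fun i _ => by rw [hsym i j]
    rw [e2, ← Finset.sum_add_distrib]
    refine Finset.sum_congr rfl fun i _ => ?_
    rw [Finset.sum_mul, ← Finset.sum_add_distrib]
    exact Finset.sum_congr rfl fun j _ => by ring
  have step1 : ∑ i, (B i i * y i ^ 2 - ∑ j ∈ Finset.univ.erase i, |B i j| * (y i ^ 2 + y j ^ 2) / 2)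
      ≤ ∑ i, ∑ j, y i * (B i j * y j) := by
    refine Finset.sum_le_sum fun i _ => ?_
    rw [← Finset.add_sum_erase _ (fun j => y i * (B i j * y j)) (Finset.mem_univ i)]
    have : -(∑ j ∈ Finset.univ.erase i, |B i j| * (y i ^ 2 + y j ^ 2) / 2)
        ≤ ∑ j ∈ Finset.univ.erase i, y i * (B i j * y j) := by
      rw [← Finset.sum_neg_distrib]
      exact Finset.sum_le_sum fun j _ => hpt i j
    have hdiag : y i * (B i i * y i) = B i i * y i ^ 2 := by ring
    linarith
  have step2 : ∑ i, (B i i * y i ^ 2 - ∑ j ∈ Finset.univ.erase i, |B i j| * (y i ^ 2 + y j ^ 2) / 2)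
      = ∑ i, (B i i - ∑ j ∈ Finset.univ.erase i, |B i j|) * y i ^ 2 := by
    rw [Finset.sum_sub_distrib, hkey, ← Finset.sum_sub_distrib]
    exact Finset.sum_congr rfl fun i _ => by ring
  have hfin : 0 < ∑ i, (B i i - ∑ j ∈ Finset.univ.erase i, |B i j|) * y i ^ 2 := by
    obtain ⟨k, hk⟩ : ∃ k, y k ≠ 0 := by
      by_contra h; push_neg at h; exact hy (funext h)
    refine Finset.sum_pos' (fun i _ => mul_nonneg (by linarith [hdom i]) (sq_nonneg _))
      ⟨k, Finset.mem_univ k, mul_pos (by linarith [hdom k]) (by positivity)⟩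
  linarith [step1, step2.symm.trans_le step1]

theorem scaled_diag_dominant_diagonal_lyapunov {n : ℕ} (A : Matrix (Fin n) (Fin n) ℝ)
    (hdiag : ∀ i, A i i < 0)
    (d e : Fin n → ℝ) (hd : ∀ i, 0 < d i) (he : ∀ i, 0 < e i)
    (hrow : ∀ i, -(A i i) * d i > ∑ j ∈ Finset.univ.erase i, |A i j| * d j)
    (hcol : ∀ i, -(A i i) * e i > ∑ j ∈ Finset.univ.erase i, |A j i| * e j) :
    (-(Matrix.diagonal (fun i => e i / d i) * A
        + Aᵀ * Matrix.diagonal (fun i => e i / d i))).PosDef := by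
  set p : Fin n → ℝ := fun i => e i / d i with hp
  have hpd : ∀ i, 0 < p i := fun i => div_pos (he i) (hd i)
  set M := -(Matrix.diagonal p * A + Aᵀ * Matrix.diagonal p) with hM
  have hMapp : ∀ i j, M i j = -(p i * A i j + A j i * p j) := by
    intro i j
    simp [hM, Matrix.diagonal_mul, Matrix.mul_diagonal, Matrix.transpose_apply]
  have hMsym : ∀ i j, M i j = M j i := fun i j => by rw [hMapp, hMapp]; ring
  -- the scaled matrix
  set C : Fin n → Fin n → ℝ := fun i j => d i * M i j * d j with hC
  have hCsym : ∀ i j, C i j = C j i := fun i j => by simp only [hC]; rw [hMsym]; ring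
  have hCdom : ∀ i, ∑ j ∈ Finset.univ.erase i, |C i j| < C i i := by
    intro i
    have hb : ∀ j, |C i j| ≤ d i * (p i * (|A i j| * d j)) + d i * (|A j i| * e j) := by
      intro j
      have : |C i j| = d i * |M i j| * d j := by
        simp only [hC]
        rw [abs_mul, abs_mul, abs_of_pos (hd i), abs_of_pos (hd j)]
      rw [this, hMapp]
      have habs : |-(p i * A i j + A j i * p j)| ≤ p i * |A i j| + |A j i| * p j := by
        rw [abs_neg]
        refine (abs_add_le _ _).trans ?_
        rw [abs_mul, abs_mul, abs_of_pos (hpd i), abs_of_pos (hpd j)]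
      have hpe : p j * d j = e j := div_mul_cancel₀ (e j) (ne_of_gt (hd j))
      have := mul_le_mul_of_nonneg_left habs (le_of_lt (hd i))
      have := mul_le_mul_of_nonneg_right this (le_of_lt (hd j))
      calc d i * |-(p i * A i j + A j i * p j)| * d j
          ≤ d i * (p i * |A i j| + |A j i| * p j) * d j := this
        _ = d i * (p i * (|A i j| * d j)) + d i * (|A j i| * (p j * d j)) := by ring
        _ = d i * (p i * (|A i j| * d j)) + d i * (|A j i| * e j) := by rw [hpe]
    have hsum : ∑ j ∈ Finset.univ.erase i, |C i j|
        ≤ d i * p i * (∑ j ∈ Finset.univ.erase i, |A i j| * d j)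
          + d i * (∑ j ∈ Finset.univ.erase i, |A j i| * e j) := by
      rw [Finset.mul_sum, Finset.mul_sum, ← Finset.sum_add_distrib]
      refine Finset.sum_le_sum fun j _ => (hb j).trans_eq (by ring)
    have h1 : d i * p i * (∑ j ∈ Finset.univ.erase i, |A i j| * d j)
        < d i * p i * (-(A i i) * d i) :=
      mul_lt_mul_of_pos_left (hrow i) (mul_pos (hd i) (hpd i))
    have h2 : d i * (∑ j ∈ Finset.univ.erase i, |A j i| * e j) < d i * (-(A i i) * e i) :=
      mul_lt_mul_of_pos_left (hcol i) (hd i)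
    have hCii : C i i = d i * p i * (-(A i i) * d i) + d i * (-(A i i) * e i) := by
      simp only [hC]
      rw [hMapp]
      have hpe : p i * d i = e i := div_mul_cancel₀ (e i) (ne_of_gt (hd i))
      linear_combination (-(A i i) * d i) * hpe
    linarith
  rw [Matrix.posDef_iff_dotProduct_mulVec]
  constructor
  · rw [Matrix.IsHermitian]
    ext i j
    rw [Matrix.conjTranspose_apply, star_trivial]
    exact hMsym j i
  · intro x hx
    have hdot : (star x) ⬝ᵥ (M *ᵥ x) = ∑ i, ∑ j, x i * (M i j * x j) := by
      simp [dotProduct, Matrix.mulVec, Finset.mul_sum]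
    rw [hdot]
    set y : Fin n → ℝ := fun i => x i / d i with hy
    have hxy : ∀ i, x i = d i * y i := fun i => by
      simp only [hy]; rw [mul_comm, div_mul_cancel₀ _ (ne_of_gt (hd i))]
    have hyne : y ≠ 0 := by
      intro h
      apply hx
      funext i
      have : y i = 0 := congrFun h i
      simp [hxy i, this]
    have heq : ∑ i, ∑ j, x i * (M i j * x j) = ∑ i, ∑ j, y i * (C i j * y j) := by
      refine Finset.sum_congr rfl fun i _ => Finset.sum_congr rfl fun j _ => ?_
      rw [hxy i, hxy j]; simp only [hC]; ring
    rw [heq]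
    exact quad_pos C hCsym hCdom y hyne
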